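/- The Rayleigh-fading detection probability P_d = 1 − F(Θ) + ∫₀^Θ exp(−(Θ−i)·4πd^(2α)/(ωκσ)) f(i) di, with F(i) = exp(−C·ω^(2/α)·i^(−2/α)) where C = λδφ²Ω/(4π) and Θ = ω·T for T independent of ω, does not depend on ω: substituting i = ω·u shows the expression is invariant under changes of ω > 0. -/

import Mathlib

open Real Set intervalIntegral

/-- The Rayleigh-fading detection probability does not depend on
`ω = P_t G_m² ℓ`: with `F_ω(i) = exp(-C·ω^(2/α)·i^(-2/α))`,
`C = λδφ²Ω/(4π)`, density `f_ω = F_ω'`, and threshold `Θ(ω) = ω·T`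
proportional to `ω`, the quantity
`P_d(ω) = 1 - F_ω(Θ(ω)) + ∫₀^{Θ(ω)} exp(-(Θ(ω)-i)·4πd^(2α)/(ωκσ)) f_ω(i) di`
takes the same value for every `ω > 0`. -/
theorem stmt13 (α lam δ φ Ωm κ σ d T : ℝ) (hα : 2 < α) (hlam : 0 < lam)
    (hδ : 0 < δ) (hφ : 0 < φ) (hΩ : 0 < Ωm) (hκ : 0 < κ) (hσ : 0 < σ)
    (hd : 0 < d) (hT : 0 < T)
    (C : ℝ) (hC : C = lam * δ * φ ^ 2 * Ωm / (4 * π))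
    (F : ℝ → ℝ → ℝ)
    (hF : ∀ ω i, F ω i = Real.exp (-C * ω ^ ((2 : ℝ) / α) * i ^ (-(2 : ℝ) / α)))
    (f : ℝ → ℝ → ℝ) (hf : ∀ ω i, f ω i = deriv (F ω) i)
    (Θ : ℝ → ℝ) (hΘ : ∀ ω, Θ ω = ω * T)
    (Pd : ℝ → ℝ)
    (hPd : ∀ ω, Pd ω = 1 - F ω (Θ ω) +
      ∫ i in (0 : ℝ)..(Θ ω),
        Real.exp (-((Θ ω - i) * (4 * π) * d ^ (2 * α) / (ω * κ * σ))) * f ω i) :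
    ∀ ω₁ ω₂ : ℝ, 0 < ω₁ → 0 < ω₂ → Pd ω₁ = Pd ω₂ := by
  have hα0 : (0:ℝ) < α := by linarith
  set p : ℝ := -(2:ℝ)/α with hp
  -- explicit formula for the density f at positive points
  have hfval : ∀ ω x : ℝ, 0 < x →
      f ω x = Real.exp (-C * ω ^ ((2:ℝ)/α) * x ^ p) *
        (-C * ω ^ ((2:ℝ)/α) * (p * x ^ (p - 1))) := by
    intro ω x hx
    have hFfun : F ω = fun i : ℝ => Real.exp (-C * ω ^ ((2:ℝ)/α) * i ^ p) :=
      funext fun i => hF ω i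
    have h1 : HasDerivAt (fun i : ℝ => -C * ω ^ ((2:ℝ)/α) * i ^ p)
        (-C * ω ^ ((2:ℝ)/α) * (p * x ^ (p - 1))) x :=
      (Real.hasDerivAt_rpow_const (Or.inl hx.ne')).const_mul _
    have h2 := h1.exp
    rw [hf, hFfun]
    exact h2.deriv
  -- Pd ω has an ω-free value
  suffices h : ∀ ω : ℝ, 0 < ω → Pd ω = 1 - Real.exp (-C * T ^ p) +
      ∫ u in (0:ℝ)..T,
        Real.exp (-((T - u) * (4 * π) * d ^ (2 * α) / (κ * σ))) *
          (Real.exp (-C * u ^ p) * (-C * (p * u ^ (p - 1)))) by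
    intro ω₁ ω₂ h1 h2
    rw [h ω₁ h1, h ω₂ h2]
  intro ω hω
  have hωT : Θ ω = ω * T := hΘ ω
  have hpow1 : ω ^ ((2:ℝ)/α) * ω ^ p = 1 := by
    rw [← Real.rpow_add hω, show (2:ℝ)/α + p = 0 by rw [hp]; ring, Real.rpow_zero]
  -- the F term
  have hFterm : F ω (Θ ω) = Real.exp (-C * T ^ p) := by
    rw [hF, hωT]
    congr 1
    rw [Real.mul_rpow hω.le hT.le, ← mul_assoc, mul_assoc (-C), hpow1, mul_one]
  rw [hPd, hFterm, hωT]
  congr 1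
  -- the integral
  have hsub := intervalIntegral.smul_integral_comp_mul_left
    (fun i => Real.exp (-((ω * T - i) * (4 * π) * d ^ (2 * α) / (ω * κ * σ))) * f ω i) ω
    (a := 0) (b := T)
  rw [mul_zero] at hsub
  rw [← hsub, ← intervalIntegral.integral_smul]
  apply intervalIntegral.integral_congr_ae
  apply Filter.Eventually.of_forall
  intro x hx
  rw [Set.uIoc_of_le hT.le] at hx
  have hx0 : 0 < x := hx.1
  have hωx : 0 < ω * x := mul_pos hω hx0
  rw [hfval ω (ω * x) hωx, Real.mul_rpow hω.le hx0.le, Real.mul_rpow hω.le hx0.le]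
  have eA : -((ω * T - ω * x) * (4 * π) * d ^ (2 * α) / (ω * κ * σ)) =
      -((T - x) * (4 * π) * d ^ (2 * α) / (κ * σ)) := by
    field_simp
  have eB : -C * ω ^ ((2:ℝ)/α) * (ω ^ p * x ^ p) = -C * x ^ p := by
    rw [← mul_assoc, mul_assoc (-C) (ω ^ ((2:ℝ)/α)), hpow1, mul_one]
  have eω : ω * ω ^ ((2:ℝ)/α) * ω ^ (p - 1) = 1 := by
    rw [show ω * ω ^ ((2:ℝ)/α) * ω ^ (p-1)
        = ω ^ (1:ℝ) * ω ^ ((2:ℝ)/α) * ω ^ (p-1) by rw [Real.rpow_one],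
      ← Real.rpow_add hω, ← Real.rpow_add hω,
      show (1:ℝ) + 2/α + (p-1) = 0 by rw [hp]; ring, Real.rpow_zero]
  rw [eA, eB, smul_eq_mul]
  set A := Real.exp (-((T - x) * (4 * π) * d ^ (2 * α) / (κ * σ)))
  set B := Real.exp (-C * x ^ p)
  linear_combination A * B * (-C) * p * x ^ (p - 1) * eω
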